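/- Let q₁ and q₂ be unimodular functions on the unit circle. Then the closure of the subspace q₁H₂⁻ + q₂H₂⁻ equals all of L² if and only if q₁/q₂ is NOT a quotient of two inner functions, i.e., there do not exist inner functions φ and ψ such that q₁·ψ = q₂·φ almost everywhere on 𝕋. -/

import Mathlib

open MeasureTheory Complex Real Filter ComplexConjugate

noncomputable section

instance : Fact (0 < 2 * Real.pi) := ⟨by positivity⟩

/-- The unit circle, realized as `ℝ / 2πℤ`. -/
abbrev UC := AddCircle (2 * Real.pi)

/-- Normalized arc-length (Haar probability) measure on the circle. -/
abbrev μc : Measure UC := AddCircle.haarAddCircle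

/-- The Lebesgue space L² of the circle. -/
abbrev L2 := Lp ℂ 2 μc

/-- The Hardy space H² viewed inside L²: vanishing negative Fourier coefficients. -/
def H2set : Set L2 := {f | ∀ n : ℤ, n < 0 → fourierCoeff (⇑f) n = 0}

/-- The space H₂⁻: vanishing positive Fourier coefficients. -/
def H2negSet : Set L2 := {f | ∀ n : ℤ, 0 < n → fourierCoeff (⇑f) n = 0}

/-- The orthogonal complement H²^⊥ of H² in L²: vanishing coefficients for n ≥ 0. -/
def HperpSet : Set L2 := {f | ∀ n : ℤ, 0 ≤ n → fourierCoeff (⇑f) n = 0}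

/-- A function belongs to the Hardy space H²: square-integrable with vanishing
negative Fourier coefficients. -/
def MemH2 (f : UC → ℂ) : Prop :=
  MemLp f 2 μc ∧ ∀ n : ℤ, n < 0 → fourierCoeff f n = 0

/-- A unimodular function on the circle. -/
def Unimodular (q : UC → ℂ) : Prop :=
  AEStronglyMeasurable q μc ∧ ∀ᵐ x ∂μc, ‖q x‖ = 1

/-- An inner function: member of H² with unit modulus a.e. on the circle. -/
def IsInner (φ : UC → ℂ) : Prop :=
  MemH2 φ ∧ ∀ᵐ x ∂μc, ‖φ x‖ = 1

/-- The backward shift U⋆, acting on boundary functions: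
`(U⋆ f)(z) = (f(z) - f̂(0))/z`. -/
def bwShift (f : UC → ℂ) : UC → ℂ :=
  fun x => fourier (-1) x * (f x - fourierCoeff f 0)

/-- `f ∈ H²` is cyclic for the backward shift: the closed linear span of the
backward-shift orbit `{U⋆ⁿ f : n ≥ 0}` is all of H². -/
def CyclicBw (f : UC → ℂ) : Prop :=
  closure ((Submodule.span ℂ {u : L2 | ∃ n : ℕ, ⇑u =ᵐ[μc] bwShift^[n] f} : Submodule ℂ L2) : Set L2)
    = H2set

/-- The subspace qH₂⁻ = {q·h : h ∈ H₂⁻} of L². -/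
def qH2neg (q : UC → ℂ) : Set L2 :=
  {u | ∃ h : L2, h ∈ H2negSet ∧ ⇑u =ᵐ[μc] fun x => q x * (⇑h) x}

/-! ### Infrastructure -/

local notation "⟪" x ", " y "⟫" => @inner ℂ _ _ x y

lemma norm_fourier_one (n : ℤ) (x : UC) : ‖fourier n x‖ = 1 := Circle.norm_coe _

lemma L2.integrable' (f : L2) : Integrable (⇑f) μc :=
  (Lp.memLp f).integrable one_le_two

lemma integrable_fourier_mul {f : UC → ℂ} (hf : Integrable f μc) (n : ℤ) :
    Integrable (fun x => fourier n x * f x) μc :=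
  hf.bdd_mul ((fourier n).continuous.aestronglyMeasurable)
    (Eventually.of_forall fun x => le_of_eq (norm_fourier_one n x))

lemma fourierCoeff_add' {f g : UC → ℂ} (hf : Integrable f μc) (hg : Integrable g μc) (n : ℤ) :
    fourierCoeff (fun x => f x + g x) n = fourierCoeff f n + fourierCoeff g n := by
  unfold fourierCoeff
  simp_rw [smul_eq_mul, mul_add]
  exact integral_add (integrable_fourier_mul hf _) (integrable_fourier_mul hg _)

lemma fourierCoeff_shift (g : UC → ℂ) (m k : ℤ) :
    fourierCoeff (fun x => fourier m x * g x) k = fourierCoeff g (k - m) := by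
  unfold fourierCoeff
  refine integral_congr_ae (Eventually.of_forall fun x => ?_)
  simp only [smul_eq_mul]
  rw [← mul_assoc, ← fourier_add]
  congr 2
  ring

/-- inner product of L2 elements as an integral. -/
lemma L2inner_eq (f g : L2) : ⟪f, g⟫ = ∫ x, conj ((⇑f) x) * (⇑g) x ∂μc := by
  rw [MeasureTheory.L2.inner_def]
  simp only [RCLike.inner_apply]
  exact integral_congr_ae (Eventually.of_forall fun x => mul_comm _ _)

/-- The Fourier basis of our L2. -/
abbrev fB : HilbertBasis ℤ ℂ L2 := @fourierBasis (2 * Real.pi) _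

lemma fB_repr (f : L2) (n : ℤ) : fB.repr f n = fourierCoeff (⇑f) n := fourierBasis_repr f n

lemma inner_fourierLp (n : ℤ) (f : L2) :
    ⟪(fourierLp 2 n : L2), f⟫ = fourierCoeff (⇑f) n := by
  rw [← fB_repr, fB.repr_apply_apply, coe_fourierBasis]

set_option maxHeartbeats 1000000 in
/-- Parseval-type orthogonality. -/
lemma inner_eq_zero_of_coeffs (x y : L2)
    (hx : ∀ k : ℤ, k ≤ 0 → fourierCoeff (⇑x) k = 0)
    (hy : ∀ k : ℤ, 0 < k → fourierCoeff (⇑y) k = 0) : ⟪x, y⟫ = 0 := by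
  have hz : (fun k : ℤ => ⟪x, fB k⟫ * ⟪fB k, y⟫) = fun _ => (0 : ℂ) := by
    funext k
    have e1 : ⟪fB k, x⟫ = fourierCoeff (⇑x) k :=
      (fB.repr_apply_apply x k).symm.trans (fB_repr x k)
    have e2 : ⟪fB k, y⟫ = fourierCoeff (⇑y) k :=
      (fB.repr_apply_apply y k).symm.trans (fB_repr y k)
    rcases le_or_gt k 0 with hk | hk
    · rw [← inner_conj_symm x (fB k), e1, hx k hk, map_zero, zero_mul]
    · rw [e2, hy k hk, mul_zero]
  rw [← fB.tsum_inner_mul_inner x y, hz, tsum_zero]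

lemma inner_symm_map (A : L2 ≃ₗᵢ[ℂ] L2) (x y : L2) : ⟪A x, y⟫ = ⟪x, A.symm y⟫ := by
  conv_lhs => rw [← A.apply_symm_apply y]
  exact A.inner_map_map x (A.symm y)

set_option maxHeartbeats 1000000 in
/-- If an L2 element is orthogonal to all Fourier monomials, it is zero. -/
lemma eq_zero_of_inner_fourierLp (g : L2) (h : ∀ n : ℤ, ⟪(fourierLp 2 n : L2), g⟫ = 0) :
    g = 0 := by
  have : fB.repr g = 0 := by
    ext n
    rw [fB_repr, ← inner_fourierLp, h]
    rfl
  simpa using fB.repr.map_eq_zero_iff.mp this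

/-! ### Multiplication operators -/

lemma Unimodular.conj' {q : UC → ℂ} (hq : Unimodular q) : Unimodular (fun x => conj (q x)) :=
  ⟨RCLike.continuous_conj.comp_aestronglyMeasurable hq.1,
   hq.2.mono fun x hx => by simpa using hx⟩

lemma Unimodular.conj_mul_self {q : UC → ℂ} (hq : Unimodular q) :
    ∀ᵐ x ∂μc, conj (q x) * q x = 1 := by
  filter_upwards [hq.2] with x hx
  have : q x * conj (q x) = ((‖q x‖ : ℂ))^2 := by
    rw [Complex.mul_conj, Complex.normSq_eq_norm_sq]
    norm_cast
  rw [mul_comm] at this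
  rw [this, hx]
  norm_num

lemma Unimodular.memℒp_mul {q : UC → ℂ} (hq : Unimodular q) (f : L2) :
    MemLp (fun x => q x * (⇑f) x) 2 μc := by
  refine MemLp.of_le (Lp.memLp f) (hq.1.mul (Lp.aestronglyMeasurable f)) ?_
  filter_upwards [hq.2] with x hx
  rw [norm_mul, hx, one_mul]

/-- Multiplication by a unimodular function, as a map `L2 → L2`. -/
def mulU (q : UC → ℂ) (hq : Unimodular q) (f : L2) : L2 :=
  (hq.memℒp_mul f).toLp _

lemma coeFn_mulU (q : UC → ℂ) (hq : Unimodular q) (f : L2) :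
    ⇑(mulU q hq f) =ᵐ[μc] fun x => q x * (⇑f) x :=
  MemLp.coeFn_toLp _

set_option maxHeartbeats 1000000 in
/-- Multiplication by a unimodular function, as a linear isometry equivalence of `L2`. -/
def mulE (q : UC → ℂ) (hq : Unimodular q) : L2 ≃ₗᵢ[ℂ] L2 where
  toFun := mulU q hq
  invFun := mulU _ hq.conj'
  map_add' := fun f g => by
    refine Lp.ext ?_
    filter_upwards [coeFn_mulU q hq (f + g), coeFn_mulU q hq f, coeFn_mulU q hq g,
      Lp.coeFn_add f g, Lp.coeFn_add (mulU q hq f) (mulU q hq g)] with x h1 h2 h3 h4 h5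
    simp only [h1, h5, Pi.add_apply, h2, h3, h4, mul_add]
  map_smul' := fun c f => by
    refine Lp.ext ?_
    filter_upwards [coeFn_mulU q hq (c • f), coeFn_mulU q hq f,
      Lp.coeFn_smul c f, Lp.coeFn_smul c (mulU q hq f)] with x h1 h2 h3 h4
    simp only [RingHom.id_apply, h1, h4, Pi.smul_apply, h2, h3, smul_eq_mul]
    ring
  left_inv := fun f => by
    refine Lp.ext ?_
    filter_upwards [coeFn_mulU _ hq.conj' (mulU q hq f), coeFn_mulU q hq f,
      hq.conj_mul_self] with x h1 h2 h3
    simp only [h1, h2]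
    calc conj (q x) * (q x * f x) = (conj (q x) * q x) * f x := by ring
    _ = f x := by rw [h3, one_mul]
  right_inv := fun f => by
    refine Lp.ext ?_
    filter_upwards [coeFn_mulU q hq (mulU _ hq.conj' f), coeFn_mulU _ hq.conj' f,
      hq.conj_mul_self] with x h1 h2 h3
    simp only [h1, h2]
    calc q x * (conj (q x) * f x) = (conj (q x) * q x) * f x := by ring
    _ = f x := by rw [h3, one_mul]
  norm_map' := fun f => by
    show ‖mulU q hq f‖ = ‖f‖
    rw [Lp.norm_def, Lp.norm_def]
    congr 1
    refine eLpNorm_congr_norm_ae ?_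
    filter_upwards [coeFn_mulU q hq f, hq.2] with x h1 h2
    rw [h1, norm_mul, h2, one_mul]

lemma coeFn_mulE (q : UC → ℂ) (hq : Unimodular q) (f : L2) :
    ⇑(mulE q hq f) =ᵐ[μc] fun x => q x * (⇑f) x :=
  coeFn_mulU q hq f

lemma coeFn_mulE_symm (q : UC → ℂ) (hq : Unimodular q) (f : L2) :
    ⇑((mulE q hq).symm f) =ᵐ[μc] fun x => conj (q x) * (⇑f) x :=
  coeFn_mulU _ hq.conj' f

lemma unimodular_fourier (n : ℤ) : Unimodular (⇑(fourier n) : UC → ℂ) :=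
  ⟨(fourier n).continuous.aestronglyMeasurable,
   Eventually.of_forall fun x => norm_fourier_one n x⟩

/-- Multiplication by the Fourier monomial `z^n`, as a unitary on L2. -/
def Un (n : ℤ) : L2 ≃ₗᵢ[ℂ] L2 := mulE _ (unimodular_fourier n)

lemma coeFn_Un (n : ℤ) (f : L2) : ⇑(Un n f) =ᵐ[μc] fun x => fourier n x * (⇑f) x :=
  coeFn_mulE _ _ f

lemma Un_comp (a b : ℤ) (f : L2) : Un a (Un b f) = Un (a + b) f := by
  refine Lp.ext ?_
  filter_upwards [coeFn_Un a (Un b f), coeFn_Un b f, coeFn_Un (a + b) f] with x h1 h2 h3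
  rw [h1, h3]
  show fourier a x * (⇑(Un b f)) x = _
  rw [h2, ← mul_assoc, ← fourier_add]

lemma Un_zero (f : L2) : Un 0 f = f := by
  refine Lp.ext ?_
  filter_upwards [coeFn_Un 0 f] with x h1
  rw [h1]
  show fourier 0 x * (⇑f) x = (⇑f) x
  rw [fourier_zero, one_mul]

lemma Un_symm (n : ℤ) (f : L2) : (Un n).symm f = Un (-n) f := by
  unfold Un
  refine Lp.ext ?_
  filter_upwards [coeFn_mulE_symm _ (unimodular_fourier n) f,
    coeFn_mulE _ (unimodular_fourier (-n)) f] with x h1 h2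
  rw [h1, h2]
  show conj (fourier n x) * (⇑f) x = fourier (-n) x * (⇑f) x
  rw [← fourier_neg]

lemma inner_Un (n : ℤ) (f g : L2) : ⟪Un n f, g⟫ = ⟪f, Un (-n) g⟫ := by
  rw [inner_symm_map, Un_symm]

/-! ### Submodule structure -/

lemma fourierCoeff_coeFn_zero (n : ℤ) : fourierCoeff (⇑(0 : L2)) n = 0 := by
  rw [congrFun (fourierCoeff_congr_ae (Lp.coeFn_zero ℂ 2 μc)) n]
  unfold fourierCoeff
  simp

lemma zero_mem_H2neg : (0 : L2) ∈ H2negSet := fun n _ => fourierCoeff_coeFn_zero n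

lemma add_mem_H2neg {f g : L2} (hf : f ∈ H2negSet) (hg : g ∈ H2negSet) : f + g ∈ H2negSet := by
  intro n hn
  have h1 : fourierCoeff (⇑(f + g)) n = fourierCoeff (fun x => (⇑f) x + (⇑g) x) n :=
    congrFun (fourierCoeff_congr_ae (Lp.coeFn_add f g)) n
  rw [h1, fourierCoeff_add' (L2.integrable' f) (L2.integrable' g), hf n hn, hg n hn, add_zero]

lemma smul_mem_H2neg (c : ℂ) {f : L2} (hf : f ∈ H2negSet) : c • f ∈ H2negSet := by
  intro n hn
  have h1 : fourierCoeff (⇑(c • f)) n = fourierCoeff (c • (⇑f)) n :=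
    congrFun (fourierCoeff_congr_ae (Lp.coeFn_smul c f)) n
  rw [h1, fourierCoeff.const_smul, hf n hn, smul_zero]

/-- `qH2neg q` as a submodule. -/
def Psub (q : UC → ℂ) : Submodule ℂ L2 where
  carrier := qH2neg q
  zero_mem' := ⟨0, zero_mem_H2neg, by
    filter_upwards [Lp.coeFn_zero ℂ 2 μc] with x h1
    simp only [h1, Pi.zero_apply, mul_zero]⟩
  add_mem' := by
    rintro a b ⟨h, hh, hae⟩ ⟨h', hh', hae'⟩
    refine ⟨h + h', add_mem_H2neg hh hh', ?_⟩
    filter_upwards [hae, hae', Lp.coeFn_add a b, Lp.coeFn_add h h'] with x e1 e2 e3 e4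
    rw [e3]
    show (⇑a) x + (⇑b) x = _ * (⇑(h + h')) x
    rw [e1, e2, e4]
    show _ = _ * ((⇑h) x + (⇑h') x)
    ring
  smul_mem' := by
    rintro c a ⟨h, hh, hae⟩
    refine ⟨c • h, smul_mem_H2neg c hh, ?_⟩
    filter_upwards [hae, Lp.coeFn_smul c a, Lp.coeFn_smul c h] with x e1 e2 e3
    rw [e2]
    show c • (⇑a) x = _ * (⇑(c • h)) x
    rw [e1, e3]
    show _ = _ * (c • (⇑h) x)
    simp only [smul_eq_mul]
    ring

lemma sum_set_eq (q₁ q₂ : UC → ℂ) :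
    {u : L2 | ∃ a ∈ qH2neg q₁, ∃ b ∈ qH2neg q₂, u = a + b} = ↑(Psub q₁ ⊔ Psub q₂) := by
  ext u
  simp only [Set.mem_setOf_eq, SetLike.mem_coe, Submodule.mem_sup]
  constructor
  · rintro ⟨a, ha, b, hb, rfl⟩; exact ⟨a, ha, b, hb, rfl⟩
  · rintro ⟨a, ha, b, hb, rfl⟩; exact ⟨a, ha, b, hb, rfl⟩

lemma closure_eq_univ_iff (K : Submodule ℂ L2) :
    closure (K : Set L2) = Set.univ ↔ Kᗮ = ⊥ := by
  rw [← Submodule.topologicalClosure_coe]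
  constructor
  · intro hc
    rw [← Submodule.topologicalClosure_eq_top_iff]
    apply SetLike.coe_injective
    rw [hc]; rfl
  · intro hb
    rw [Submodule.topologicalClosure_eq_top_iff.mpr hb]; rfl

/-! ### Fourier monomials and coefficients -/

lemma integral_fourier {k : ℤ} (hk : k ≠ 0) : ∫ x, fourier k x ∂μc = 0 := by
  have horth := orthonormal_fourier (T := 2 * Real.pi)
  have h2 : ⟪(fourierLp 2 (0:ℤ) : L2), (fourierLp 2 k : L2)⟫ = 0 :=
    horth.2 (show (0 : ℤ) ≠ k by omega)
  rw [L2inner_eq] at h2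
  rw [← h2]
  refine integral_congr_ae ?_
  filter_upwards [coeFn_fourierLp 2 (0 : ℤ), coeFn_fourierLp 2 (k : ℤ)] with x e0 ek
  rw [e0, ek, fourier_zero, map_one, one_mul]

lemma fourierCoeff_one {k : ℤ} (hk : k ≠ 0) :
    fourierCoeff (fun _ : UC => (1 : ℂ)) k = 0 := by
  unfold fourierCoeff
  simp only [smul_eq_mul, mul_one]
  exact integral_fourier (by omega)

lemma fourierCoeff_one_zero : fourierCoeff (fun _ : UC => (1 : ℂ)) 0 = 0 + 1 := by
  unfold fourierCoeff
  simp only [neg_zero, fourier_zero, smul_eq_mul, one_mul]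
  rw [integral_const]
  simp

lemma fourierCoeff_const (c : ℂ) (k : ℤ) :
    fourierCoeff (fun _ : UC => c) k = if k = 0 then c else 0 := by
  have : (fun _ : UC => c) = fun x : UC => c * (fun _ : UC => (1:ℂ)) x := by funext x; simp
  rw [this, fourierCoeff.const_mul]
  split_ifs with h
  · subst h
    rw [show fourierCoeff (fun _ : UC => (1:ℂ)) 0 = 1 by rw [fourierCoeff_one_zero]; ring]
    ring
  · rw [fourierCoeff_one h, mul_zero]

lemma fourierCoeff_fourier' (n k : ℤ) :
    fourierCoeff (⇑(fourier n) : UC → ℂ) k = if k = n then 1 else 0 := by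
  have : (⇑(fourier n) : UC → ℂ) = fun x => fourier n x * (fun _ : UC => (1:ℂ)) x := by
    funext x; simp
  rw [this, fourierCoeff_shift, fourierCoeff_const]
  by_cases h : k = n
  · simp [h]
  · have h2 : k - n ≠ 0 := fun hh => h (by omega)
    simp [h, h2]

lemma fourierLp_coeff (n k : ℤ) :
    fourierCoeff (⇑(fourierLp 2 n : L2)) k = if k = n then 1 else 0 := by
  rw [congrFun (fourierCoeff_congr_ae (coeFn_fourierLp 2 n)) k, fourierCoeff_fourier']

lemma fourierLp_mem_H2neg {n : ℤ} (hn : n ≤ 0) : (fourierLp 2 n : L2) ∈ H2negSet := by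
  intro m hm
  rw [fourierLp_coeff]
  split_ifs with h
  · omega
  · rfl

lemma mulE_fourierLp_mem {q : UC → ℂ} (hq : Unimodular q) {n : ℤ} (hn : n ≤ 0) :
    mulE q hq (fourierLp 2 n) ∈ Psub q :=
  ⟨fourierLp 2 n, fourierLp_mem_H2neg hn, coeFn_mulE q hq _⟩

lemma Un_neg_mulE_fourierLp {q : UC → ℂ} (hq : Unimodular q) (n : ℤ) :
    Un (-n) (mulE q hq (fourierLp 2 n)) = mulE q hq (fourierLp 2 0) := by
  refine Lp.ext ?_
  filter_upwards [coeFn_Un (-n) (mulE q hq (fourierLp 2 n)), coeFn_mulE q hq (fourierLp 2 n),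
    coeFn_mulE q hq (fourierLp 2 0), coeFn_fourierLp 2 n, coeFn_fourierLp 2 (0:ℤ)]
    with x h1 h2 h3 h4 h5
  rw [h1, h3]
  show fourier (-n) x * (⇑(mulE q hq (fourierLp 2 n))) x = _
  rw [h2, h4, h5, fourier_zero, mul_one]
  calc fourier (-n) x * (q x * fourier n x) = q x * (fourier (-n) x * fourier n x) := by ring
  _ = q x := by rw [← fourier_add]; simp [fourier_zero]

/-- Multiplication by `z⁻¹` maps the subspace `q₁H₂⁻ + q₂H₂⁻` to itself. -/
lemma Un_neg_one_mem_Psub {q : UC → ℂ} (hq : Unimodular q) {u : L2} (hu : u ∈ Psub q) :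
    Un (-1) u ∈ Psub q := by
  obtain ⟨h, hh, hae⟩ := hu
  refine ⟨Un (-1) h, ?_, ?_⟩
  · intro m hm
    rw [congrFun (fourierCoeff_congr_ae (coeFn_Un (-1) h)) m, fourierCoeff_shift, hh]
    omega
  · filter_upwards [coeFn_Un (-1) u, coeFn_Un (-1) h, hae] with x e1 e2 e3
    rw [e1]
    show fourier (-1) x * (⇑u) x = _ * (⇑(Un (-1) h)) x
    rw [e3, e2]
    show _ = _ * (fourier (-1) x * (⇑h) x)
    ring

lemma Un_neg_one_mem_sup {q₁ q₂ : UC → ℂ} (h₁ : Unimodular q₁) (h₂ : Unimodular q₂) {u : L2}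
    (hu : u ∈ Psub q₁ ⊔ Psub q₂) : Un (-1) u ∈ Psub q₁ ⊔ Psub q₂ := by
  rw [Submodule.mem_sup] at hu ⊢
  obtain ⟨a, ha, b, hb, rfl⟩ := hu
  exact ⟨Un (-1) a, Un_neg_one_mem_Psub h₁ ha, Un (-1) b, Un_neg_one_mem_Psub h₂ hb,
    (map_add (Un (-1)) a b).symm⟩

lemma Un_one_mem_orth {q₁ q₂ : UC → ℂ} (h₁ : Unimodular q₁) (h₂ : Unimodular q₂) {m : L2}
    (hm : m ∈ (Psub q₁ ⊔ Psub q₂)ᗮ) : Un 1 m ∈ (Psub q₁ ⊔ Psub q₂)ᗮ := by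
  rw [Submodule.mem_orthogonal] at hm ⊢
  intro u hu
  have e1 : ⟪u, Un 1 m⟫ = ⟪Un (-1) u, Un (-1) (Un 1 m)⟫ := ((Un (-1)).inner_map_map u _).symm
  rw [e1, Un_comp, (by ring : (-1 : ℤ) + 1 = 0), Un_zero]
  exact hm _ (Un_neg_one_mem_sup h₁ h₂ hu)

/-- L¹-uniqueness ingredients -/

lemma integrable_contMap_mul {w : UC → ℂ} (hw : Integrable w μc) (f : C(UC, ℂ)) :
    Integrable (fun x => f x * w x) μc :=
  hw.bdd_mul f.continuous.aestronglyMeasurable (Eventually.of_forall fun x => f.norm_coe_le_norm x)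

lemma integral_contMap_mul_eq_zero {w : UC → ℂ} (hw : Integrable w μc)
    (h : ∀ n : ℤ, fourierCoeff w n = 0) (f : C(UC, ℂ)) : ∫ x, f x * w x ∂μc = 0 := by
  set Φl : C(UC, ℂ) →ₗ[ℂ] ℂ :=
    { toFun := fun f => ∫ x, f x * w x ∂μc
      map_add' := fun f g => by
        simp only [ContinuousMap.add_apply]
        rw [← integral_add (integrable_contMap_mul hw f) (integrable_contMap_mul hw g)]
        congr 1; funext x; ring
      map_smul' := fun c f => by
        simp only [ContinuousMap.smul_apply, RingHom.id_apply, smul_eq_mul]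
        rw [← integral_const_mul]
        congr 1; funext x; ring } with hΦl
  have hbound : ∀ f : C(UC, ℂ), ‖Φl f‖ ≤ (∫ x, ‖w x‖ ∂μc) * ‖f‖ := by
    intro f
    refine (norm_integral_le_integral_norm _).trans ?_
    rw [← integral_mul_const]
    refine integral_mono (integrable_contMap_mul hw f).norm (hw.norm.mul_const _) fun x => ?_
    rw [norm_mul]
    exact mul_le_mul_of_nonneg_right (f.norm_coe_le_norm x) (norm_nonneg _) |>.trans
      (le_of_eq (mul_comm _ _))
  set Φ : C(UC, ℂ) →L[ℂ] ℂ := LinearMap.mkContinuous Φl _ hbound with hΦ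
  have hvanish : ∀ g ∈ Submodule.span ℂ (Set.range (@fourier (2 * Real.pi))), Φ g = 0 := by
    intro g hg
    induction hg using Submodule.span_induction with
    | mem g hgm =>
      obtain ⟨m, rfl⟩ := hgm
      have : Φ (fourier m) = fourierCoeff w (-m) := by
        show (∫ x, fourier m x * w x ∂μc) = _
        unfold fourierCoeff
        simp only [neg_neg, smul_eq_mul]
      rw [this, h]
    | zero => simp
    | add g g' _ _ hgz hgz' => rw [map_add, hgz, hgz', add_zero]
    | smul c g _ hgz => rw [_root_.map_smul, hgz, smul_zero]
  have hdense : Dense ((Submodule.span ℂ (Set.range (@fourier (2 * Real.pi))) : Set C(UC, ℂ))) := by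
    rw [dense_iff_closure_eq, ← Submodule.topologicalClosure_coe, span_fourier_closure_eq_top]
    rfl
  have : (⇑Φ) = (fun _ => (0 : ℂ)) :=
    Continuous.ext_on hdense Φ.continuous continuous_zero hvanish
  exact congrFun this f

lemma ae_zero_of_fourierCoeff_zero {w : UC → ℂ} (hw : Integrable w μc)
    (h : ∀ n : ℤ, fourierCoeff w n = 0) : w =ᵐ[μc] 0 := by
  refine ae_eq_zero_of_forall_setIntegral_isClosed_eq_zero hw fun s hs => ?_
  have δpos : ∀ n : ℕ, (0 : ℝ) < 1 / (n + 1) := fun n => by positivity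
  have δlim : Tendsto (fun n : ℕ => 1 / ((n : ℝ) + 1)) atTop (nhds 0) :=
    tendsto_one_div_add_atTop_nhds_zero_nat
  have key := thickenedIndicator_tendsto_indicator_closure δpos δlim s
  rw [tendsto_pi_nhds] at key
  set g : ℕ → C(UC, ℂ) := fun n =>
    ⟨fun x => ((thickenedIndicator (δpos n) s x : ℝ) : ℂ),
      Complex.continuous_ofReal.comp (NNReal.continuous_coe.comp
        (thickenedIndicator (δpos n) s).continuous)⟩ with hg
  have hzero : ∀ n, ∫ x, g n x * w x ∂μc = 0 := fun n =>
    integral_contMap_mul_eq_zero hw h (g n)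
  have hlim : Tendsto (fun n => ∫ x, g n x * w x ∂μc) atTop
      (nhds (∫ x, s.indicator (fun _ => (1 : ℂ)) x * w x ∂μc)) := by
    refine tendsto_integral_of_dominated_convergence (fun x => ‖w x‖)
      (fun n => (integrable_contMap_mul hw (g n)).aestronglyMeasurable) hw.norm
      (fun n => Eventually.of_forall fun x => ?_) (Eventually.of_forall fun x => ?_)
    · rw [norm_mul]
      refine mul_le_mul_of_nonneg_right ?_ (norm_nonneg _) |>.trans (le_of_eq (one_mul _))
      show ‖((thickenedIndicator (δpos n) s x : ℝ) : ℂ)‖ ≤ 1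
      rw [Complex.norm_real, Real.norm_eq_abs, _root_.abs_of_nonneg (by positivity)]
      exact_mod_cast thickenedIndicator_le_one (δpos n) s x
    · refine Tendsto.mul_const _ ?_
      have hx := key x
      rw [hs.closure_eq] at hx
      have h3 := ((Complex.continuous_ofReal.comp NNReal.continuous_coe).tendsto
        (s.indicator (fun _ => (1 : NNReal)) x)).comp hx
      convert h3 using 2
      · rfl
      by_cases hxs : x ∈ s <;> simp [hxs]
  have h0 : (0 : ℂ) = ∫ x, s.indicator (fun _ => (1 : ℂ)) x * w x ∂μc :=
    tendsto_nhds_unique (tendsto_const_nhds.congr fun n => (hzero n).symm) hlim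
  have : ∫ x, s.indicator (fun _ => (1 : ℂ)) x * w x ∂μc = ∫ x in s, w x ∂μc := by
    rw [← integral_indicator hs.measurableSet]
    congr 1; funext x
    by_cases hxs : x ∈ s <;> simp [hxs]
  rw [← this, ← h0]


/-! ### Auxiliary lemmas for the main theorem -/

/-- If `a ∈ qH₂⁻` and `f` represents `z·q·χ` with `χ ∈ H²`, then `a ⊥ f`. -/
lemma inner_eq_zero_aux {q χ : UC → ℂ} (hq : Unimodular q) (hχm : MemLp χ 2 μc)
    (hχc : ∀ n : ℤ, n < 0 → fourierCoeff χ n = 0)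
    {a : L2} (ha : a ∈ Psub q) (f : L2)
    (hf : ⇑f =ᵐ[μc] fun x => fourier 1 x * (q x * χ x)) :
    ⟪a, f⟫ = 0 := by
  obtain ⟨h, hh, hae⟩ := ha
  have hZm : MemLp (fun x => fourier 1 x * χ x) 2 μc := by
    refine MemLp.of_le hχm
      ((fourier 1).continuous.aestronglyMeasurable.mul hχm.aestronglyMeasurable) ?_
    refine Eventually.of_forall fun x => ?_
    rw [norm_mul, norm_fourier_one, one_mul]
  set Z : L2 := hZm.toLp _ with hZdef
  have h1 : ⟪f, a⟫ = ⟪Z, h⟫ := by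
    rw [L2inner_eq, L2inner_eq]
    refine integral_congr_ae ?_
    filter_upwards [hf, hae, hZm.coeFn_toLp, hq.conj_mul_self] with x e1 e2 e3 e4
    rw [e1, e2, e3]
    simp only [map_mul]
    linear_combination (conj (fourier 1 x) * conj (χ x) * (⇑h) x) * e4
  have h2 : ⟪Z, h⟫ = 0 := by
    refine inner_eq_zero_of_coeffs Z h (fun k hk => ?_) hh
    rw [fourierCoeff_congr_ae hZm.coeFn_toLp, fourierCoeff_shift]
    exact hχc (k - 1) (by omega)
  rw [← inner_conj_symm, h1, h2, map_zero]

/-- Construction of an inner function from an element of constant modulus in the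
orthogonal complement. -/
lemma isInner_construct {q : UC → ℂ} (hq : Unimodular q) (θ : L2) (K : Submodule ℂ L2)
    (hθM : θ ∈ Kᗮ) (hPK : Psub q ≤ K)
    (hmod : ∀ᵐ x ∂μc, ‖(⇑θ) x‖ = ‖θ‖) (hθne : θ ≠ 0) :
    IsInner (fun x => ((‖θ‖ : ℝ) : ℂ)⁻¹ * (fourier (-1) x * (conj (q x) * (⇑θ) x))) := by
  have hr : 0 < ‖θ‖ := norm_pos_iff.mpr hθne
  have hmeas : AEStronglyMeasurable
      (fun x => ((‖θ‖ : ℝ) : ℂ)⁻¹ * (fourier (-1) x * (conj (q x) * (⇑θ) x))) μc :=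
    (((fourier (-1)).continuous.aestronglyMeasurable.mul
      ((RCLike.continuous_conj.comp_aestronglyMeasurable hq.1).mul
        (Lp.aestronglyMeasurable θ)))).const_mul _
  have hnorm1 : ∀ᵐ x ∂μc,
      ‖((‖θ‖ : ℝ) : ℂ)⁻¹ * (fourier (-1) x * (conj (q x) * (⇑θ) x))‖ = 1 := by
    filter_upwards [hmod, hq.2] with x e1 e2
    rw [norm_mul, norm_mul, norm_mul, norm_fourier_one, RCLike.norm_conj, e2, e1, norm_inv]
    rw [Complex.norm_real, Real.norm_eq_abs, _root_.abs_of_nonneg hr.le]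
    field_simp
  refine ⟨⟨?_, ?_⟩, hnorm1⟩
  · exact MemLp.of_bound hmeas 1 (hnorm1.mono fun x hx => le_of_eq hx)
  · intro n hn
    rw [fourierCoeff.const_mul]
    have e1 : fourierCoeff (fun x => fourier (-1) x * (conj (q x) * (⇑θ) x)) n
        = ⟪mulE q hq (fourierLp 2 (n+1)), θ⟫ := by
      rw [L2inner_eq]
      unfold fourierCoeff
      refine integral_congr_ae ?_
      filter_upwards [coeFn_mulE q hq (fourierLp 2 (n+1)), coeFn_fourierLp 2 (n+1)]
        with x e2 e3
      show fourier (-n) x • (fourier (-1) x * (conj (q x) * (⇑θ) x))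
        = conj ((⇑(mulE q hq (fourierLp 2 (n+1)))) x) * (⇑θ) x
      rw [e2]
      show _ = conj (q x * (⇑(fourierLp 2 (n+1) : L2)) x) * (⇑θ) x
      rw [e3, map_mul, ← fourier_neg, smul_eq_mul]
      have e4 : fourier (-n) x * fourier (-1) x = fourier (-(n+1)) x := by
        rw [← fourier_add]; congr 1; ring
      calc fourier (-n) x * (fourier (-1) x * (conj (q x) * (⇑θ) x))
          = (fourier (-n) x * fourier (-1) x) * (conj (q x) * (⇑θ) x) := by ring
        _ = fourier (-(n+1)) x * (conj (q x) * (⇑θ) x) := by rw [e4]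
        _ = conj (q x) * fourier (-(n+1)) x * (⇑θ) x := by ring
    rw [e1, (Submodule.mem_orthogonal K θ).mp hθM _ (hPK (mulE_fourierLp_mem hq (by omega))),
      mul_zero]

/-! ### The main theorem -/

set_option maxHeartbeats 2000000 in
set_option synthInstance.maxHeartbeats 200000 in
/-- For unimodular `q₁, q₂`: the closure of `q₁H₂⁻ + q₂H₂⁻` is all of L² iff `q₁/q₂` is
not a quotient of two inner functions. -/
theorem stmt9 (q₁ q₂ : UC → ℂ) (h₁ : Unimodular q₁) (h₂ : Unimodular q₂) :
    closure {u : L2 | ∃ a ∈ qH2neg q₁, ∃ b ∈ qH2neg q₂, u = a + b} = Set.univ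
    ↔ ¬ ∃ φ ψ : UC → ℂ, IsInner φ ∧ IsInner ψ ∧
        ∀ᵐ x ∂μc, q₁ x * ψ x = q₂ x * φ x := by
  rw [sum_set_eq q₁ q₂, closure_eq_univ_iff]
  set K : Submodule ℂ L2 := Psub q₁ ⊔ Psub q₂ with hK
  have hμne : μc ≠ 0 := IsProbabilityMeasure.ne_zero μc
  haveI : (ae μc).NeBot := ae_neBot.mpr hμne
  constructor
  · -- dense → no inner quotient
    rintro hM ⟨φ, ψ, hφ, hψ, hrel⟩
    have hFm : MemLp (fun x => fourier 1 x * (q₁ x * ψ x)) 2 μc := by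
      refine MemLp.of_bound ((fourier 1).continuous.aestronglyMeasurable.mul
        (h₁.1.mul hψ.1.1.aestronglyMeasurable)) 1 ?_
      filter_upwards [h₁.2, hψ.2] with x e1 e2
      rw [norm_mul, norm_mul, norm_fourier_one, e1, e2]
      norm_num
    set f : L2 := hFm.toLp _ with hfdef
    have hf1 : ⇑f =ᵐ[μc] fun x => fourier 1 x * (q₁ x * ψ x) := hFm.coeFn_toLp
    have hf2 : ⇑f =ᵐ[μc] fun x => fourier 1 x * (q₂ x * φ x) := by
      filter_upwards [hf1, hrel] with x e1 e2
      rw [e1]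
      show fourier 1 x * (q₁ x * ψ x) = fourier 1 x * (q₂ x * φ x)
      rw [e2]
    have hfM : f ∈ Kᗮ := by
      rw [Submodule.mem_orthogonal]
      intro u hu
      rw [hK, Submodule.mem_sup] at hu
      obtain ⟨a, ha, b, hb, rfl⟩ := hu
      rw [inner_add_left,
        inner_eq_zero_aux h₁ hψ.1.1 hψ.1.2 ha f hf1,
        inner_eq_zero_aux h₂ hφ.1.1 hφ.1.2 hb f hf2, add_zero]
    rw [hM, Submodule.mem_bot] at hfM
    have h0 : ⇑f =ᵐ[μc] (fun _ => (0 : ℂ)) := by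
      rw [hfM]
      exact Lp.coeFn_zero ℂ 2 μc
    have hcontra : ∀ᵐ x ∂μc, False := by
      filter_upwards [hf1, h0, h₁.2, hψ.2] with x e1 e2 e3 e4
      have : ‖fourier 1 x * (q₁ x * ψ x)‖ = 0 := by
        rw [← e1, e2]
        simp
      rw [norm_mul, norm_mul, norm_fourier_one, e3, e4] at this
      norm_num at this
    exact hcontra.exists.choose_spec
  · -- no inner quotient → dense
    intro hno
    by_contra hM
    set M : Submodule ℂ L2 := Kᗮ with hMdef
    set N : Submodule ℂ L2 := M.map ((Un 1).toLinearEquiv.toLinearMap) with hNdef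
    have hU1M : ∀ m ∈ M, Un 1 m ∈ M := fun m hm => Un_one_mem_orth h₁ h₂ hm
    have hNM : N ≤ M := by
      rintro _ ⟨m, hm, rfl⟩
      exact hU1M m hm
    have hMcl : IsClosed (M : Set L2) := Submodule.isClosed_orthogonal K
    have hNcl : IsClosed (N : Set L2) := by
      have e1 : (N : Set L2) = (Un 1).toHomeomorph '' (M : Set L2) := by
        rw [hNdef, Submodule.map_coe]
        rfl
      rw [e1]
      exact (Un 1).toHomeomorph.isClosedMap _ hMcl
    have hUnat : ∀ (j : ℕ), ∀ m ∈ M, Un (j : ℤ) m ∈ M := by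
      intro j
      induction j with
      | zero => intro m hm; rwa [show (((0:ℕ)):ℤ) = 0 by norm_num, Un_zero]
      | succ k ih =>
        intro m hm
        have e1 := hU1M _ (ih m hm)
        rwa [Un_comp, show (1:ℤ) + (k:ℤ) = (((k+1 : ℕ)):ℤ) by push_cast; ring] at e1
    have hUposM : ∀ j : ℤ, 0 ≤ j → ∀ m ∈ M, Un j m ∈ M := by
      intro j hj m hm
      have e1 := hUnat j.toNat m hm
      rwa [Int.toNat_of_nonneg hj] at e1
    by_cases hMN : M ≤ N
    · -- doubly invariant case: M = ⊥, contradiction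
      have hUnegM : ∀ m ∈ M, Un (-1) m ∈ M := by
        intro m hm
        obtain ⟨m', hm', hmeq⟩ := hMN hm
        have e1 : Un 1 m' = m := hmeq
        have e2 : Un (-1) m = m' := by
          rw [← e1, Un_comp, show (-1 : ℤ) + 1 = 0 by ring, Un_zero]
        rwa [e2]
      have hUnegNat : ∀ (j : ℕ), ∀ m ∈ M, Un (-(j : ℤ)) m ∈ M := by
        intro j
        induction j with
        | zero => intro m hm; rwa [show (-((0:ℕ):ℤ)) = 0 by norm_num, Un_zero]
        | succ k ih =>
          intro m hm
          have e1 := hUnegM _ (ih m hm)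
          rwa [Un_comp, show (-1:ℤ) + -((k:ℕ):ℤ) = -(((k+1 : ℕ)):ℤ) by push_cast; ring] at e1
      have hallM : ∀ j : ℤ, ∀ m ∈ M, Un j m ∈ M := by
        intro j m hm
        rcases le_or_gt 0 j with hj | hj
        · exact hUposM j hj m hm
        · have e1 := hUnegNat (-j).toNat m hm
          rwa [show -(((-j).toNat : ℤ)) = j by
            rw [Int.toNat_of_nonneg (by omega : (0:ℤ) ≤ -j)]; ring] at e1
      obtain ⟨θ₀, hθ₀M, hθ₀⟩ := Submodule.ne_bot_iff M |>.mp hM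
      refine hθ₀ ?_
      have hz : (mulE q₁ h₁).symm θ₀ = 0 := by
        apply eq_zero_of_inner_fourierLp
        intro n
        rw [← inner_symm_map (mulE q₁ h₁) (fourierLp 2 n) θ₀]
        have e2 : ⟪mulE q₁ h₁ (fourierLp 2 n), θ₀⟫
            = ⟪Un (-n) (mulE q₁ h₁ (fourierLp 2 n)), Un (-n) θ₀⟫ :=
          ((Un (-n)).inner_map_map _ _).symm
        rw [e2, Un_neg_mulE_fourierLp]
        have hmem : mulE q₁ h₁ (fourierLp 2 0) ∈ K :=
          Submodule.mem_sup_left (mulE_fourierLp_mem h₁ le_rfl)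
        exact (Submodule.mem_orthogonal K _).mp (hallM (-n) θ₀ hθ₀M) _ hmem
      exact (mulE q₁ h₁).symm.map_eq_zero_iff.mp hz
    · -- simply invariant case: wandering vector of constant modulus
      obtain ⟨m₀, hm₀M, hm₀N⟩ := SetLike.not_le_iff_exists.mp hMN
      haveI : CompleteSpace N := hNcl.completeSpace_coe
      haveI : N.HasOrthogonalProjection := Submodule.HasOrthogonalProjection.ofCompleteSpace N
      set θ : L2 := m₀ - (N.orthogonalProjection m₀ : L2) with hθdef
      have hθNperp : θ ∈ Nᗮ := by exact Submodule.sub_starProjection_mem_orthogonal (K := N) m₀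
      have hθM : θ ∈ M := M.sub_mem hm₀M (hNM (N.orthogonalProjection m₀).2)
      have hθne : θ ≠ 0 := by
        intro h0
        apply hm₀N
        have e1 : m₀ = ((N.orthogonalProjection m₀ : N) : L2) := by
          rw [hθdef] at h0
          have := sub_eq_zero.mp h0
          exact this
        rw [e1]
        exact (N.orthogonalProjection m₀).2
      have hUnN : ∀ k : ℤ, 1 ≤ k → Un k θ ∈ N := by
        intro k hk
        refine ⟨Un (k - 1) θ, hUposM (k - 1) (by omega) θ hθM, ?_⟩
        show Un 1 (Un (k - 1) θ) = Un k θ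
        rw [Un_comp]
        congr 1
        ring
      -- constancy of the modulus
      have hInt : Integrable (fun x => conj ((⇑θ) x) * (⇑θ) x) μc := by
        have e1 := MeasureTheory.L2.integrable_inner (𝕜 := ℂ) θ θ
        exact e1.congr (Eventually.of_forall fun x => by simp only [RCLike.inner_apply, mul_comm])
      set c : ℂ := ((‖θ‖ : ℝ) : ℂ)^2 with hcdef
      have hcoeffA : ∀ k : ℤ, fourierCoeff (fun x => conj ((⇑θ) x) * (⇑θ) x) k
          = ⟪θ, Un (-k) θ⟫ := by
        intro k
        rw [L2inner_eq]
        unfold fourierCoeff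
        refine integral_congr_ae ?_
        filter_upwards [coeFn_Un (-k) θ] with x e1
        show fourier (-k) x • (conj ((⇑θ) x) * (⇑θ) x)
          = conj ((⇑θ) x) * (⇑(Un (-k) θ)) x
        rw [e1, smul_eq_mul]
        show _ = conj ((⇑θ) x) * (fourier (-k) x * (⇑θ) x)
        ring
      have hwInt : Integrable (fun x => conj ((⇑θ) x) * (⇑θ) x - c) μc :=
        hInt.sub (integrable_const c)
      have hw : (fun x => conj ((⇑θ) x) * (⇑θ) x - c) =ᵐ[μc] 0 := by
        apply ae_zero_of_fourierCoeff_zero hwInt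
        intro k
        have e0 : (fun x => conj ((⇑θ) x) * (⇑θ) x - c)
            = fun x => (fun y => conj ((⇑θ) y) * (⇑θ) y) x + (fun _ : UC => -c) x := by
          funext x; ring
        rw [e0, fourierCoeff_add' hInt (integrable_const _), hcoeffA, fourierCoeff_const]
        by_cases hk : k = 0
        · subst hk
          rw [if_pos rfl]
          have e9 : ⟪θ, Un (-0) θ⟫ = c := by
            rw [show (-(0:ℤ)) = 0 from neg_zero, Un_zero, inner_self_eq_norm_sq_to_K, hcdef]
            norm_cast
          rw [e9]
          ring
        · rw [if_neg hk]
          have hz : ⟪θ, Un (-k) θ⟫ = 0 := by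
            rcases lt_or_gt_of_ne hk with hkneg | hkpos
            · have hN := hUnN (-k) (by omega)
              rw [← inner_conj_symm, (Submodule.mem_orthogonal N θ).mp hθNperp _ hN, map_zero]
            · have e2 : ⟪θ, Un (-k) θ⟫ = ⟪Un k θ, Un k (Un (-k) θ)⟫ :=
                ((Un k).inner_map_map _ _).symm
              rw [e2, Un_comp, show k + -k = (0:ℤ) by ring, Un_zero]
              exact (Submodule.mem_orthogonal N θ).mp hθNperp _ (hUnN k (by omega))
          rw [hz, add_zero]
      have hmodθ : ∀ᵐ x ∂μc, ‖(⇑θ) x‖ = ‖θ‖ := by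
        filter_upwards [hw] with x e1
        have e2 : conj ((⇑θ) x) * (⇑θ) x = c :=
          sub_eq_zero.mp (by simpa using e1)
        have e4 : ((‖(⇑θ) x‖ : ℂ))^2 = ((‖θ‖ : ℂ))^2 := by
          rw [← hcdef, ← e2, mul_comm (conj ((⇑θ) x)) ((⇑θ) x), Complex.mul_conj,
            Complex.normSq_eq_norm_sq]
          push_cast
          ring
        have e5 : ‖(⇑θ) x‖^2 = ‖θ‖^2 := by exact_mod_cast e4
        rw [← Real.sqrt_sq (norm_nonneg ((⇑θ) x)), e5, Real.sqrt_sq (norm_nonneg θ)]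
      -- build the inner functions
      have hψ0 := isInner_construct h₁ θ K hθM le_sup_left hmodθ hθne
      have hφ0 := isInner_construct h₂ θ K hθM le_sup_right hmodθ hθne
      refine hno ⟨_, _, hφ0, hψ0, ?_⟩
      filter_upwards [h₁.conj_mul_self, h₂.conj_mul_self] with x e1 e2
      show q₁ x * (((‖θ‖ : ℝ) : ℂ)⁻¹ * (fourier (-1) x * (conj (q₁ x) * (⇑θ) x)))
        = q₂ x * (((‖θ‖ : ℝ) : ℂ)⁻¹ * (fourier (-1) x * (conj (q₂ x) * (⇑θ) x)))
      linear_combination (((‖θ‖ : ℝ) : ℂ)⁻¹ * fourier (-1) x * (⇑θ) x) * e1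
        - (((‖θ‖ : ℝ) : ℂ)⁻¹ * fourier (-1) x * (⇑θ) x) * e2
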